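/- Let b ≥ 0, ρ > 0, y* > 0 and p ∈ ℝ, and set B(y) = p − b·(y − y*) and D⁺(y) = p + (y − y*)/ρ. In the presence of the fast trader the slow trader's surplus from buying y stocks is γ_A(y) = ∫₀ʸ B(u) du − y·D⁺(y). Then γ_A is uniquely maximised over [0,∞) at y_A = ((1 + bρ)/(2 + bρ))·y* > 0; that is, γ_A(y) ≤ γ_A(y_A) for all y ≥ 0 with equality only at y = y_A. -/

import Mathlib

/-- With linear marginal demand, in the presence of the fast trader the slow trader's
surplus `γ_A` is uniquely maximised over `[0,∞)` at
`y_A = ((1+bρ)/(2+bρ))·y* > 0`. -/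
theorem stmt_13 (b ρ ystar p : ℝ) (hb : 0 ≤ b) (hρ : 0 < ρ) (hystar : 0 < ystar)
    (B Dp γA : ℝ → ℝ) (yA : ℝ)
    (hB : ∀ y, B y = p - b * (y - ystar))
    (hD : ∀ y, Dp y = p + (y - ystar) / ρ)
    (hγ : ∀ y, γA y = (∫ u in (0:ℝ)..y, B u) - y * Dp y)
    (hyA : yA = ((1 + b * ρ) / (2 + b * ρ)) * ystar) :
    0 < yA ∧ (∀ y, 0 ≤ y → γA y ≤ γA yA) ∧
      (∀ y, 0 ≤ y → γA y = γA yA → y = yA) := by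
  have hρ' : (ρ : ℝ) ≠ 0 := ne_of_gt hρ
  have hden : (0:ℝ) < 2 + b * ρ := by nlinarith
  -- closed form of γA
  have hγ' : ∀ y, γA y = -(b/2 + 1/ρ) * y^2 + (b + 1/ρ) * ystar * y := by
    intro y
    have hint : (∫ u in (0:ℝ)..y, B u)
        = (p + b * ystar) * y - b * (y^2 / 2) := by
      have : (∫ u in (0:ℝ)..y, B u)
          = ∫ u in (0:ℝ)..y, ((p + b * ystar) - b * u) := by
        apply intervalIntegral.integral_congr
        intro u _; simp [hB u]; ring
      rw [this, intervalIntegral.integral_sub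
        (continuous_const.intervalIntegrable _ _)
        ((show Continuous (fun u : ℝ => b * u) from continuous_const.mul continuous_id).intervalIntegrable _ _)]
      rw [intervalIntegral.integral_const, intervalIntegral.integral_const_mul]
      rw [integral_id]
      simp [smul_eq_mul]
      ring
    rw [hγ y, hint, hD y]
    field_simp
    ring
  have hc : (0:ℝ) < b/2 + 1/ρ := by positivity
  -- key identity
  have key : ∀ y, γA y = γA yA - (b/2 + 1/ρ) * (y - yA)^2 := by
    intro y
    rw [hγ' y, hγ' yA, hyA]
    have h1 : (1 + b * ρ) / (2 + b * ρ) * ystar * (2 + b * ρ) = (1 + b*ρ) * ystar := by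
      field_simp
    field_simp
    nlinarith [sq_nonneg ystar, sq_nonneg y]
  refine ⟨?_, ?_, ?_⟩
  · rw [hyA]; positivity
  · intro y _; rw [key y]; nlinarith [sq_nonneg (y - yA)]
  · intro y _ hy
    have := key y
    rw [hy] at this
    have h2 : (y - yA)^2 = 0 := by nlinarith
    have := pow_eq_zero_iff (n := 2) (by norm_num) |>.mp h2
    linarith
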